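/- For n ≥ 3, k ≥ 3, any 1 ≤ i < j ≤ n, and any nonzero integer a, the element a·x_i x_j^{k-1} of S^k H does not lie in the image of the Morita trace MT_k restricted to the special derivation module b_n(k). -/

import Mathlib

open FreeLieAlgebra

/-- The degree-`k` homogeneous part of the free Lie ring on `n` generators,
spanned by left-normed brackets of `k` generators. -/
noncomputable def Ln (n : ℕ) : ℕ → Submodule ℤ (FreeLieAlgebra ℤ (Fin n))
  | 0 => ⊥
  | 1 => Submodule.span ℤ (Set.range (FreeLieAlgebra.of ℤ))
  | (k+2) => Submodule.span ℤ
      {y | ∃ a ∈ Ln n (k+1), ∃ i : Fin n, y = ⁅a, FreeLieAlgebra.of ℤ i⁆}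

/-- Left-normed bracket `[x, xs₁, xs₂, …]`. -/
noncomputable def lnb {n : ℕ} (x : Fin n) (xs : List (Fin n)) : FreeLieAlgebra ℤ (Fin n) :=
  xs.foldl (fun a j => ⁅a, FreeLieAlgebra.of ℤ j⁆) (FreeLieAlgebra.of ℤ x)

/-- The tangential derivation module `p_n(k)` in the representation
`H^* ⊗ L_n(k+1) ≅ (Fin n → L_n)`, spanned by the `x_i^* ⊗ [c, x_i]`. -/
noncomputable def pnM (n k : ℕ) : Submodule ℤ (Fin n → FreeLieAlgebra ℤ (Fin n)) :=
  Submodule.span ℤ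
    {f | ∃ i : Fin n, ∃ c ∈ Ln n k, f = Pi.single i ⁅c, FreeLieAlgebra.of ℤ i⁆}

/-- Summation map sending `Σ x_i^* ⊗ C_i` to `Σ C_i`. -/
noncomputable def sumMap (n : ℕ) :
    (Fin n → FreeLieAlgebra ℤ (Fin n)) →ₗ[ℤ] FreeLieAlgebra ℤ (Fin n) :=
  LinearMap.lsum ℤ (fun _ : Fin n => FreeLieAlgebra ℤ (Fin n)) ℤ (fun _ => LinearMap.id)

/-- The special derivation module `b_n(k)`. -/
noncomputable def bnM (n k : ℕ) : Submodule ℤ (Fin n → FreeLieAlgebra ℤ (Fin n)) :=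
  pnM n k ⊓ LinearMap.ker (sumMap n)

attribute [local instance 100] LieRing.ofAssociativeRing

/-- The embedding of the free Lie ring into the tensor (free) algebra. -/
noncomputable def embT (n : ℕ) : FreeLieAlgebra ℤ (Fin n) →ₗ[ℤ] FreeAlgebra ℤ (Fin n) :=
  (FreeLieAlgebra.lift ℤ (fun i : Fin n => FreeAlgebra.ι ℤ i)).toLinearMap

/-- The word `x_{j₁} ⊗ ⋯ ⊗ x_{j_m}` in the tensor algebra. -/
def wordT {n : ℕ} (L : List (Fin n)) : FreeAlgebra ℤ (Fin n) :=
  (L.map (FreeAlgebra.ι ℤ)).prod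

/-- Contraction of the first tensor factor against `x_i^*`. -/
noncomputable def contractT (n : ℕ) (i : Fin n) :
    FreeAlgebra ℤ (Fin n) →ₗ[ℤ] FreeAlgebra ℤ (Fin n) :=
  (FreeAlgebra.basisFreeMonoid ℤ (Fin n)).constr ℤ fun w =>
    match FreeMonoid.toList w with
    | [] => 0
    | j :: rest => if j = i then wordT rest else 0

/-- Abelianization of the tensor algebra, `T(H) → ⊕ₖ Sᵏ H`. -/
noncomputable def abelT (n : ℕ) : FreeAlgebra ℤ (Fin n) →ₐ[ℤ] MvPolynomial (Fin n) ℤ :=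
  FreeAlgebra.lift ℤ (fun i : Fin n => MvPolynomial.X i)

/-- The Morita trace component at index `p`. -/
noncomputable def MTc (n : ℕ) (p : Fin n) :
    FreeLieAlgebra ℤ (Fin n) →ₗ[ℤ] MvPolynomial (Fin n) ℤ :=
  (abelT n).toLinearMap ∘ₗ contractT n p ∘ₗ embT n

/-- The full Morita trace on `H^* ⊗ L_n(k+1) ≅ (Fin n → L_n)`. -/
noncomputable def MTfull (n : ℕ) :
    (Fin n → FreeLieAlgebra ℤ (Fin n)) →ₗ[ℤ] MvPolynomial (Fin n) ℤ :=
  LinearMap.lsum ℤ (fun _ : Fin n => FreeLieAlgebra ℤ (Fin n)) ℤ (fun p => MTc n p)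

namespace MoritaAux

variable {n : ℕ}

/-- letter weights: `i ↦ 1`, `j ↦ -1`, rest `0`. -/
def eFun (i j : Fin n) : Fin n → ℤ := fun p => if p = i then 1 else if p = j then -1 else 0

noncomputable def epsA (i j : Fin n) : FreeAlgebra ℤ (Fin n) →ₐ[ℤ] ℤ :=
  FreeAlgebra.lift ℤ (eFun i j)

noncomputable def evP (i j : Fin n) : MvPolynomial (Fin n) ℤ →ₐ[ℤ] ℤ :=
  MvPolynomial.aeval (eFun i j)

def Mi : Matrix (Fin 3) (Fin 3) ℤ := !![0,1,0; 0,1,0; 0,0,0]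
def Mj : Matrix (Fin 3) (Fin 3) ℤ := !![0,0,0; 0,0,1; 0,0,1]
def EE : Matrix (Fin 3) (Fin 3) ℤ := !![0,0,1; 0,0,1; 0,0,0]
def FF : Matrix (Fin 2) (Fin 2) ℤ := !![0,1; 0,0]

noncomputable def Amat (i j : Fin n) : FreeAlgebra ℤ (Fin n) →ₐ[ℤ] Matrix (Fin 3) (Fin 3) ℤ :=
  FreeAlgebra.lift ℤ (fun r => if r = i then Mi else if r = j then Mj else 0)

noncomputable def Bmat (i j p : Fin n) : FreeAlgebra ℤ (Fin n) →ₐ[ℤ] Matrix (Fin 2) (Fin 2) ℤ :=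
  FreeAlgebra.lift ℤ (fun r => !![0, if r = p then 1 else 0; 0, eFun i j r])

lemma hMiMj : Mi * Mj = EE := by
  ext a b; fin_cases a <;> fin_cases b <;>
    simp [Mi, Mj, EE, Matrix.mul_apply, Fin.sum_univ_three, Matrix.vecHead, Matrix.vecTail]

lemma hMjMi : Mj * Mi = 0 := by
  ext a b; fin_cases a <;> fin_cases b <;>
    simp [Mi, Mj, Matrix.mul_apply, Fin.sum_univ_three, Matrix.vecHead, Matrix.vecTail]

lemma hEMi : EE * Mi = 0 := by
  ext a b; fin_cases a <;> fin_cases b <;>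
    simp [Mi, EE, Matrix.mul_apply, Fin.sum_univ_three, Matrix.vecHead, Matrix.vecTail]

lemma hMiE : Mi * EE = EE := by
  ext a b; fin_cases a <;> fin_cases b <;>
    simp [Mi, EE, Matrix.mul_apply, Fin.sum_univ_three, Matrix.vecHead, Matrix.vecTail]

lemma hEMj : EE * Mj = EE := by
  ext a b; fin_cases a <;> fin_cases b <;>
    simp [Mj, EE, Matrix.mul_apply, Fin.sum_univ_three, Matrix.vecHead, Matrix.vecTail]

lemma hMjE : Mj * EE = 0 := by
  ext a b; fin_cases a <;> fin_cases b <;>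
    simp [Mj, EE, Matrix.mul_apply, Fin.sum_univ_three, Matrix.vecHead, Matrix.vecTail]

lemma comm2 (a b c d : ℤ) :
    !![0,a;0,b] * !![0,c;0,d] - !![0,c;0,d] * !![0,a;0,b] = (a*d - c*b) • FF := by
  ext x y; fin_cases x <;> fin_cases y <;>
    simp [FF, Matrix.mul_apply, Fin.sum_univ_two, Matrix.vecHead, Matrix.vecTail, Matrix.sub_apply] <;> ring

lemma FF_mul (c d : ℤ) : FF * !![0,c;0,d] = d • FF := by
  ext x y; fin_cases x <;> fin_cases y <;>
    simp [FF, Matrix.mul_apply, Fin.sum_univ_two, Matrix.vecHead, Matrix.vecTail]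

lemma mul_FF (c d : ℤ) : !![0,c;0,d] * FF = 0 := by
  ext x y; fin_cases x <;> fin_cases y <;>
    simp [FF, Matrix.mul_apply, Fin.sum_univ_two, Matrix.vecHead, Matrix.vecTail]

end MoritaAux
namespace MoritaAux

lemma embT_of {n : ℕ} (r : Fin n) : embT n (FreeLieAlgebra.of ℤ r) = FreeAlgebra.ι ℤ r := by
  show FreeLieAlgebra.lift ℤ _ (FreeLieAlgebra.of ℤ r) = _
  exact FreeLieAlgebra.lift_of_apply _ _

lemma embT_lie {n : ℕ} (u v : FreeLieAlgebra ℤ (Fin n)) :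
    embT n ⁅u, v⁆ = embT n u * embT n v - embT n v * embT n u := by
  show FreeLieAlgebra.lift ℤ _ ⁅u, v⁆ = _
  rw [LieHom.map_lie, Ring.lie_def]
  rfl

/-- The inductive invariant for `c ∈ Ln n d`, `d ≥ 2`. -/
def Pinv {n : ℕ} (i j : Fin n) (d : ℕ) (c : FreeLieAlgebra ℤ (Fin n)) : Prop :=
  ∃ t : ℤ, ∃ μ : Fin n → ℤ, μ i = (-1)^(d+1) * t ∧ μ j = (-1)^(d+1) * t ∧
    Amat i j (embT n c) = t • EE ∧ ∀ p, Bmat i j p (embT n c) = μ p • FF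

lemma Pinv_zero {n : ℕ} (i j : Fin n) (d : ℕ) : Pinv i j d 0 := by
  refine ⟨0, 0, by simp, by simp, by simp, fun p => by simp⟩

lemma Pinv_add {n : ℕ} {i j : Fin n} {d : ℕ} {c₁ c₂ : FreeLieAlgebra ℤ (Fin n)}
    (h₁ : Pinv i j d c₁) (h₂ : Pinv i j d c₂) : Pinv i j d (c₁ + c₂) := by
  obtain ⟨t₁, μ₁, hi₁, hj₁, hA₁, hB₁⟩ := h₁
  obtain ⟨t₂, μ₂, hi₂, hj₂, hA₂, hB₂⟩ := h₂
  refine ⟨t₁ + t₂, μ₁ + μ₂, ?_, ?_, ?_, fun p => ?_⟩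
  · simp [hi₁, hi₂]; ring
  · simp [hj₁, hj₂]; ring
  · simp [hA₁, hA₂, add_smul]
  · simp [hB₁ p, hB₂ p, add_smul]

lemma Pinv_smul {n : ℕ} {i j : Fin n} {d : ℕ} (z : ℤ) {c : FreeLieAlgebra ℤ (Fin n)}
    (h : Pinv i j d c) : Pinv i j d (z • c) := by
  obtain ⟨t, μ, hi, hj, hA, hB⟩ := h
  refine ⟨z * t, z • μ, ?_, ?_, ?_, fun p => ?_⟩
  · simp [hi]; ring
  · simp [hj]; ring
  · simp [hA, smul_smul, mul_assoc]
  · simp [hB p, smul_smul, mul_assoc]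

end MoritaAux
namespace MoritaAux

lemma Amat_ι {n : ℕ} (i j r : Fin n) :
    Amat i j (FreeAlgebra.ι ℤ r) = if r = i then Mi else if r = j then Mj else 0 :=
  FreeAlgebra.lift_ι_apply _ _

lemma Bmat_ι {n : ℕ} (i j p r : Fin n) :
    Bmat i j p (FreeAlgebra.ι ℤ r) = !![0, if r = p then 1 else 0; 0, eFun i j r] :=
  FreeAlgebra.lift_ι_apply _ _

lemma Pinv_step {n : ℕ} {i j : Fin n} {d : ℕ} {a : FreeLieAlgebra ℤ (Fin n)}
    (q : Fin n) (ha : Pinv i j d a) : Pinv i j (d+1) ⁅a, FreeLieAlgebra.of ℤ q⁆ := by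
  obtain ⟨t, μ, hmi, hmj, hA, hB⟩ := ha
  refine ⟨(if q = i then -1 else if q = j then 1 else 0) * t, fun p => eFun i j q * μ p,
    ?_, ?_, ?_, fun p => ?_⟩
  · by_cases hqi : q = i
    · subst hqi; simp [eFun, hmi]; ring
    · by_cases hqj : q = j
      · subst hqj; simp [eFun, hqi, hmi]; ring
      · simp [eFun, hqi, hqj]
  · by_cases hqi : q = i
    · subst hqi; simp [eFun, hmj]; ring
    · by_cases hqj : q = j
      · subst hqj; simp [eFun, hqi, hmj]; ring
      · simp [eFun, hqi, hqj]
  · rw [embT_lie, map_sub, map_mul, map_mul, hA, embT_of, Amat_ι]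
    by_cases hqi : q = i
    · subst hqi
      simp only [eq_self_iff_true, if_true]
      rw [Matrix.smul_mul, Matrix.mul_smul, hEMi, hMiE, smul_zero, zero_sub, neg_one_mul,
        neg_smul]
    · by_cases hqj : q = j
      · subst hqj
        simp only [hqi, if_false, eq_self_iff_true, if_true]
        rw [Matrix.smul_mul, Matrix.mul_smul, hEMj, hMjE, smul_zero, sub_zero, one_mul]
      · simp only [hqi, hqj, if_false]
        rw [mul_zero, zero_mul, sub_self, zero_mul, zero_smul]
  · rw [embT_lie, map_sub, map_mul, map_mul, hB p, embT_of, Bmat_ι]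
    rw [Matrix.smul_mul, Matrix.mul_smul, FF_mul, mul_FF]
    rw [smul_smul, smul_zero, sub_zero, mul_comm]

lemma Pinv_base {n : ℕ} {i j : Fin n} (hij : i ≠ j) (r q : Fin n) :
    Pinv i j 2 ⁅FreeLieAlgebra.of ℤ r, FreeLieAlgebra.of ℤ q⁆ := by
  refine ⟨(if r = i then 1 else 0) * (if q = j then 1 else 0)
      - (if r = j then 1 else 0) * (if q = i then 1 else 0),
    fun p => (if r = p then 1 else 0) * eFun i j q - (if q = p then 1 else 0) * eFun i j r,
    ?_, ?_, ?_, fun p => ?_⟩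
  · by_cases hri : r = i <;> by_cases hrj : r = j <;> by_cases hqi : q = i <;>
      by_cases hqj : q = j <;> simp_all [eFun] <;> ring
  · by_cases hri : r = i <;> by_cases hrj : r = j <;> by_cases hqi : q = i <;>
      by_cases hqj : q = j <;> simp_all [eFun] <;> ring
  · rw [embT_lie, map_sub, map_mul, map_mul, embT_of, embT_of, Amat_ι, Amat_ι]
    by_cases hri : r = i <;> by_cases hrj : r = j <;> by_cases hqi : q = i <;>
      by_cases hqj : q = j <;>
      simp_all [hMiMj, hMjMi, sub_self, sub_zero, zero_sub, zero_smul, one_smul,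
        neg_smul, mul_zero, zero_mul]
  · rw [embT_lie, map_sub, map_mul, map_mul, embT_of, embT_of, Bmat_ι, Bmat_ι, comm2]

end MoritaAux
namespace MoritaAux

lemma Pinv_ln {n : ℕ} {i j : Fin n} (hij : i ≠ j) :
    ∀ m : ℕ, ∀ c ∈ Ln n (m + 2), Pinv i j (m + 2) c := by
  intro m
  induction m with
  | zero =>
    intro c hc
    have hc' : c ∈ Submodule.span ℤ
        {y | ∃ a ∈ Ln n 1, ∃ q : Fin n, y = ⁅a, FreeLieAlgebra.of ℤ q⁆} := hc
    refine Submodule.span_induction ?_ (Pinv_zero i j 2) (fun x y _ _ hx hy => Pinv_add hx hy)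
      (fun z x _ hx => Pinv_smul z hx) hc'
    rintro y ⟨a, ha, q, rfl⟩
    have ha' : a ∈ Submodule.span ℤ (Set.range (FreeLieAlgebra.of ℤ)) := ha
    refine Submodule.span_induction (p := fun a _ => Pinv i j 2 ⁅a, FreeLieAlgebra.of ℤ q⁆)
      ?_ ?_ ?_ ?_ ha'
    · rintro x ⟨r, rfl⟩
      exact Pinv_base hij r q
    · show Pinv i j 2 ⁅(0 : FreeLieAlgebra ℤ (Fin n)), FreeLieAlgebra.of ℤ q⁆
      rw [zero_lie]; exact Pinv_zero i j 2
    · intro x y _ _ hx hy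
      show Pinv i j 2 ⁅x + y, FreeLieAlgebra.of ℤ q⁆
      rw [add_lie]; exact Pinv_add hx hy
    · intro z x _ hx
      show Pinv i j 2 ⁅z • x, FreeLieAlgebra.of ℤ q⁆
      rw [smul_lie]; exact Pinv_smul z hx
  | succ m ih =>
    intro c hc
    have hc' : c ∈ Submodule.span ℤ
        {y | ∃ a ∈ Ln n (m + 2), ∃ q : Fin n, y = ⁅a, FreeLieAlgebra.of ℤ q⁆} := hc
    refine Submodule.span_induction ?_ (Pinv_zero i j _) (fun x y _ _ hx hy => Pinv_add hx hy)
      (fun z x _ hx => Pinv_smul z hx) hc'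
    rintro y ⟨a, ha, q, rfl⟩
    exact Pinv_step q (ih a ha)

end MoritaAux
namespace MoritaAux

lemma wordT_nil {n : ℕ} : wordT ([] : List (Fin n)) = 1 := rfl

lemma wordT_cons {n : ℕ} (r : Fin n) (l : List (Fin n)) :
    wordT (r :: l) = FreeAlgebra.ι ℤ r * wordT l := by
  simp [wordT]

lemma equiv_wordT {n : ℕ} (l : List (Fin n)) :
    FreeAlgebra.equivMonoidAlgebraFreeMonoid (wordT l) =
      MonoidAlgebra.single (FreeMonoid.ofList l) (1 : ℤ) := by
  induction l with
  | nil =>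
    rw [wordT_nil, map_one, FreeMonoid.ofList_nil, MonoidAlgebra.one_def]
  | cons r l ih =>
    rw [wordT_cons, map_mul, ih, FreeMonoid.ofList_cons]
    have : FreeAlgebra.equivMonoidAlgebraFreeMonoid (FreeAlgebra.ι ℤ r) =
        MonoidAlgebra.single (FreeMonoid.of r) (1 : ℤ) := by
      simp [FreeAlgebra.equivMonoidAlgebraFreeMonoid, FreeAlgebra.lift_ι_apply,
        MonoidAlgebra.of_apply]
    rw [this, MonoidAlgebra.single_mul_single, one_mul]

lemma basis_eq {n : ℕ} (w : FreeMonoid (Fin n)) :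
    (FreeAlgebra.basisFreeMonoid ℤ (Fin n)) w = wordT (FreeMonoid.toList w) := by
  rw [FreeAlgebra.basisFreeMonoid, Module.Basis.map_apply]
  show (FreeAlgebra.equivMonoidAlgebraFreeMonoid (R := ℤ) (X := Fin n)).symm
      ((MonoidAlgebra.coeffLinearEquiv ℤ).symm (Finsupp.basisSingleOne w)) =
        wordT (FreeMonoid.toList w)
  rw [AlgEquiv.symm_apply_eq, equiv_wordT, FreeMonoid.ofList_toList]
  exact (congrArg (MonoidAlgebra.coeffLinearEquiv ℤ).symm
    (congrFun Finsupp.coe_basisSingleOne w)).symm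

end MoritaAux
namespace MoritaAux

lemma epsA_wordT {n : ℕ} (i j : Fin n) (l : List (Fin n)) :
    epsA i j (wordT l) = (l.map (eFun i j)).prod := by
  induction l with
  | nil => rw [wordT_nil, map_one]; rfl
  | cons r l ih =>
    rw [wordT_cons, map_mul, ih]
    simp [epsA, FreeAlgebra.lift_ι_apply]

/-- `(0,1)` entry of `Bmat` on a word. -/
def lamB {n : ℕ} (i j p : Fin n) : List (Fin n) → ℤ
  | [] => 0
  | r :: l => (if r = p then 1 else 0) * ((l.map (eFun i j)).prod)

lemma Bmat_wordT {n : ℕ} (i j p : Fin n) (l : List (Fin n)) :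
    Bmat i j p (wordT l) =
      !![if l = [] then 1 else 0, lamB i j p l; 0, (l.map (eFun i j)).prod] := by
  induction l with
  | nil =>
    rw [wordT_nil, map_one]
    simp [lamB, Matrix.one_fin_two]
  | cons r l ih =>
    rw [wordT_cons, map_mul, ih, Bmat_ι]
    rw [Matrix.mul_fin_two]
    simp [lamB]

lemma eps_contract {n : ℕ} (i j p : Fin n) (Z : FreeAlgebra ℤ (Fin n)) :
    epsA i j (contractT n p Z) = Bmat i j p Z 0 1 := by
  have entry : ∀ (a b : Fin 2), ∃ φ : Matrix (Fin 2) (Fin 2) ℤ →ₗ[ℤ] ℤ,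
      ∀ M, φ M = M a b := fun a b =>
    ⟨{ toFun := fun M => M a b, map_add' := fun _ _ => rfl, map_smul' := fun _ _ => rfl },
      fun _ => rfl⟩
  obtain ⟨φ, hφ⟩ := entry 0 1
  have : (epsA i j).toLinearMap ∘ₗ contractT n p
      = φ ∘ₗ (Bmat i j p).toLinearMap := by
    apply Module.Basis.ext (FreeAlgebra.basisFreeMonoid ℤ (Fin n))
    intro w
    show epsA i j (contractT n p _) = φ (Bmat i j p _)
    rw [hφ]
    unfold contractT
    erw [Module.Basis.constr_basis]
    rw [basis_eq, Bmat_wordT]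
    rcases hl : FreeMonoid.toList w with _ | ⟨r, rest⟩ <;> simp only [hl]
    · simp [lamB]
    · by_cases hrp : r = p
      · simp [hrp, lamB, epsA_wordT]
      · simp [hrp, lamB]
  have := congrArg (fun g => g Z) this
  exact this.trans (hφ _)

end MoritaAux
namespace MoritaAux

lemma MTfull_single {n : ℕ} (p : Fin n) (v : FreeLieAlgebra ℤ (Fin n)) :
    MTfull n (Pi.single p v) = MTc n p v := by
  rw [MTfull, LinearMap.lsum_apply, LinearMap.sum_apply]
  rw [Finset.sum_eq_single p]
  · simp
  · intro q _ hq
    simp [LinearMap.proj_apply, Pi.single_eq_of_ne hq]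
  · simp

lemma sumMap_single {n : ℕ} (p : Fin n) (v : FreeLieAlgebra ℤ (Fin n)) :
    sumMap n (Pi.single p v) = v := by
  rw [sumMap, LinearMap.lsum_apply, LinearMap.sum_apply]
  rw [Finset.sum_eq_single p]
  · simp
  · intro q _ hq
    simp [LinearMap.proj_apply, Pi.single_eq_of_ne hq]
  · simp

lemma evAbel {n : ℕ} (i j : Fin n) (z : FreeAlgebra ℤ (Fin n)) :
    evP i j (abelT n z) = epsA i j z := by
  have h : (evP i j).comp (abelT n) = epsA i j := by
    apply FreeAlgebra.hom_ext
    funext r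
    simp [evP, abelT, epsA, FreeAlgebra.lift_ι_apply]
  calc evP i j (abelT n z) = ((evP i j).comp (abelT n)) z := rfl
    _ = epsA i j z := by rw [h]

lemma key {n k : ℕ} {i j : Fin n} (hij : i ≠ j) (h3 : 3 ≤ k) :
    ∀ f ∈ pnM n k,
      evP i j (MTfull n f) = (-1)^k * (Amat i j (embT n (sumMap n f)) 0 2) := by
  intro f hf
  refine Submodule.span_induction ?_ ?_ ?_ ?_ hf
  · rintro g ⟨p, c, hc, rfl⟩
    rw [MTfull_single, sumMap_single]
    rw [show MTc n p ⁅c, FreeLieAlgebra.of ℤ p⁆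
        = abelT n (contractT n p (embT n ⁅c, FreeLieAlgebra.of ℤ p⁆)) from rfl]
    rw [evAbel, eps_contract]
    obtain ⟨t, μ, hmi, hmj, hA, hB⟩ := Pinv_ln (i := i) (j := j) hij (k - 2) c
      (by rw [show k - 2 + 2 = k by omega]; exact hc)
    have hsign : ((-1 : ℤ))^(k - 2 + 2 + 1) = (-1)^(k+1) := by
      rw [show k - 2 + 2 = k by omega]
    rw [hsign] at hmi hmj
    rw [embT_lie, map_sub, map_mul, map_mul, hB p, embT_of, Bmat_ι]
    rw [map_sub, map_mul, map_mul, hA, Amat_ι]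
    rw [if_pos rfl]
    rw [Matrix.smul_mul, Matrix.mul_smul, FF_mul, mul_FF, smul_smul, smul_zero, sub_zero]
    rw [Matrix.smul_apply]
    have hFF01 : FF 0 1 = 1 := rfl
    rw [hFF01, smul_eq_mul, mul_one]
    have hEE02 : EE 0 2 = 1 := rfl
    by_cases hpi : p = i
    · rw [if_pos hpi, hpi]
      rw [Matrix.smul_mul, Matrix.mul_smul, hEMi, hMiE, smul_zero, zero_sub]
      rw [Matrix.neg_apply, Matrix.smul_apply, hEE02, smul_eq_mul, mul_one, hmi]
      rw [show eFun i j i = 1 from by simp [eFun]]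
      rw [pow_succ]
      ring
    · by_cases hpj : p = j
      · rw [if_neg hpi, if_pos hpj, hpj]
        rw [Matrix.smul_mul, Matrix.mul_smul, hEMj, hMjE, smul_zero, sub_zero]
        rw [Matrix.smul_apply, hEE02, smul_eq_mul, mul_one, hmj]
        rw [show eFun i j j = -1 from by simp [eFun, Ne.symm hij]]
        rw [pow_succ]
        ring
      · rw [if_neg hpi, if_neg hpj]
        rw [mul_zero, zero_mul, sub_self]
        rw [show eFun i j p = 0 from by simp [eFun, hpi, hpj]]
        rw [Matrix.zero_apply, mul_zero, mul_zero]
  · simp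
  · intro x y _ _ hx hy
    simp only [map_add]
    rw [hx, hy, Matrix.add_apply]
    ring
  · intro z x _ hx
    simp only [map_smul, map_zsmul]
    rw [Matrix.smul_apply, smul_eq_mul, smul_eq_mul, hx]
    ring

end MoritaAux

/-- For `n ≥ 3`, `k ≥ 3`, `i < j` and any nonzero integer `a`, the element
`a · x_i x_j^{k-1}` of `Sᵏ H` is not in the image of the Morita trace restricted to the
special derivation module `b_n(k)`. -/
theorem monomial_not_in_morita_image (n k : ℕ) (hn : 3 ≤ n) (h3 : 3 ≤ k)
    (i j : Fin n) (hij : i < j) (a : ℤ) (ha : a ≠ 0) :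
    ¬ ∃ f ∈ bnM n k, MTfull n f =
        a • (MvPolynomial.X i * MvPolynomial.X j ^ (k - 1)) := by
  rintro ⟨f, hf, heq⟩
  have hij' : i ≠ j := ne_of_lt hij
  obtain ⟨hf1, hf2⟩ := Submodule.mem_inf.mp hf
  have h0 : sumMap n f = 0 := LinearMap.mem_ker.mp hf2
  have hkey := MoritaAux.key hij' h3 f hf1
  rw [h0, map_zero, map_zero, Matrix.zero_apply, mul_zero, heq] at hkey
  rw [map_smul, map_mul, map_pow] at hkey
  have hXi : MoritaAux.evP i j (MvPolynomial.X i) = 1 := by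
    simp [MoritaAux.evP, MoritaAux.eFun]
  have hXj : MoritaAux.evP i j (MvPolynomial.X j) = -1 := by
    simp [MoritaAux.evP, MoritaAux.eFun, Ne.symm hij']
  rw [hXi, hXj, one_mul, smul_eq_mul] at hkey
  exact mul_ne_zero ha (pow_ne_zero _ (by norm_num)) hkey
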